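/- Let X be a subshift over a finite alphabet A ⊆ ℤ, let v ∈ ℤ² be nonzero, and let u ∈ ℤ² be nonzero with ⟨u, v⟩ = 0. Let k > |⟨u^⊥, v⟩| be such that the box B = B_u^k determines cell 0 in X, i.e., for all d, e ∈ X, d|_B = e|_B implies d(0) = e(0). Then for all d, e ∈ X satisfying τ^v(d) − d = τ^v(e) − e: if d|_B = e|_B then d|_{H_{−u}} = e|_{H_{−u}}. -/

import Mathlib

/-- Translation of a configuration by `t`: `(Translate t c) n = c (n - t)`. -/
def Translate {A : Type*} (t : ℤ × ℤ) (c : ℤ × ℤ → A) : ℤ × ℤ → A :=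
  fun n => c (n - t)

/-- The orbit of a configuration: the set of all its translates. -/
def orbit {A : Type*} (c : ℤ × ℤ → A) : Set (ℤ × ℤ → A) :=
  { d | ∃ t : ℤ × ℤ, d = Translate t c }

/-- The orbit closure: the topological closure of the orbit (in the product
topology of the discrete topology on the alphabet). -/
def orbitClosure {A : Type*} [TopologicalSpace A] (c : ℤ × ℤ → A) : Set (ℤ × ℤ → A) :=
  closure (orbit c)

/-- The standard inner product on `ℤ²`. -/
def inner2 (x u : ℤ × ℤ) : ℤ := x.1 * u.1 + x.2 * u.2

/-- The discrete half plane in direction `u`. -/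
def halfPlane (u : ℤ × ℤ) : Set (ℤ × ℤ) := { x | inner2 x u < 0 }

/-- A set of configurations is deterministic in direction `u`: the contents of a
configuration on the half plane `H_u` determine the whole configuration. -/
def DeterministicIn {A : Type*} (X : Set (ℤ × ℤ → A)) (u : ℤ × ℤ) : Prop :=
  ∀ d ∈ X, ∀ e ∈ X, Set.EqOn d e (halfPlane u) → d = e

/-- The set of `D`-patterns appearing in `c` : restrictions of translates of `c` to `D`. -/
def patterns {A : Type*} (c : ℤ × ℤ → A) (D : Set (ℤ × ℤ)) : Set (D → A) :=
  { p | ∃ t : ℤ × ℤ, ∀ x : D, p x = Translate t c x }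

/-- A configuration is periodic if it is fixed by some non-trivial translation. -/
def Periodic {A : Type*} (c : ℤ × ℤ → A) : Prop :=
  ∃ t : ℤ × ℤ, t ≠ 0 ∧ Translate t c = c

/-- The discrete rectangle `{1,…,n} × {1,…,m}`. -/
def rect (n m : ℕ) : Set (ℤ × ℤ) :=
  { x | 1 ≤ x.1 ∧ x.1 ≤ (n : ℤ) ∧ 1 ≤ x.2 ∧ x.2 ≤ (m : ℤ) }

/-- The difference operator `τ^v - id`, corresponding to multiplication by the
Laurent polynomial `x^v - 1`. -/
def diffOp (v : ℤ × ℤ) (d : ℤ × ℤ → ℤ) : ℤ × ℤ → ℤ := fun n => d (n - v) - d n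

/-- Perpendicular vector: `(n,m)^⊥ = (m,−n)`. -/
def perp (u : ℤ × ℤ) : ℤ × ℤ := (u.2, -u.1)

/-- The discrete box `B_u^k`. -/
def Box (u : ℤ × ℤ) (k : ℤ) : Set (ℤ × ℤ) :=
  { x | -k < inner2 x u ∧ inner2 x u < 0 ∧ -k < inner2 x (perp u) ∧ inner2 x (perp u) < k }

/-- A subshift: a set of configurations closed in the product topology and closed
under translations. -/
def IsSubshift {A : Type*} [TopologicalSpace A] (X : Set (ℤ × ℤ → A)) : Prop :=
  IsClosed X ∧ ∀ c ∈ X, ∀ t : ℤ × ℤ, Translate t c ∈ X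

lemma inner2_comm' (x y : ℤ × ℤ) : inner2 x y = inner2 y x := by unfold inner2; ring

lemma inner2_add_left' (x y w : ℤ × ℤ) : inner2 (x + y) w = inner2 x w + inner2 y w := by
  unfold inner2; simp [Prod.fst_add, Prod.snd_add]; ring

lemma inner2_sub_left' (x y w : ℤ × ℤ) : inner2 (x - y) w = inner2 x w - inner2 y w := by
  unfold inner2; simp [Prod.fst_sub, Prod.snd_sub]; ring

lemma inner2_smul' (m : ℤ) (v w : ℤ × ℤ) : inner2 (m * v.1, m * v.2) w = m * inner2 v w := by
  unfold inner2; ring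

/-- Let `X` be a subshift over a finite alphabet `A ⊆ ℤ`, `v ≠ 0`,
`u ≠ 0` with `⟨u,v⟩ = 0`, and `k > |⟨u^⊥,v⟩|` such that the box `B = B_u^k`
determines cell `0` in `X`. If `d, e ∈ X` satisfy `τ^v(d) − d = τ^v(e) − e` and
agree on `B`, then they agree on the half plane `H_{−u}`. -/
theorem eqOn_halfPlane_of_eqOn_box
    (A : Finset ℤ) (X : Set (ℤ × ℤ → ℤ)) (hX : IsSubshift X)
    (hA : ∀ c ∈ X, ∀ n : ℤ × ℤ, c n ∈ A)
    (v : ℤ × ℤ) (hv : v ≠ 0) (u : ℤ × ℤ) (hu : u ≠ 0) (huv : inner2 u v = 0)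
    (k : ℤ) (hk : |inner2 (perp u) v| < k)
    (hdet : ∀ d ∈ X, ∀ e ∈ X, Set.EqOn d e (Box u k) → d 0 = e 0)
    (d : ℤ × ℤ → ℤ) (hd : d ∈ X) (e : ℤ × ℤ → ℤ) (he : e ∈ X)
    (hde : diffOp v d = diffOp v e)
    (hB : Set.EqOn d e (Box u k)) :
    Set.EqOn d e (halfPlane (-u)) := by

  -- basic facts
  have hk0 : 0 < k := lt_of_le_of_lt (abs_nonneg _) hk
  set s : ℤ := inner2 (perp u) v with hs_def
  have hs0 : s ≠ 0 := by
    intro hs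
    apply hv
    have h1 : u.1 * v.1 + u.2 * v.2 = 0 := huv
    have h2 : u.2 * v.1 + (-u.1) * v.2 = 0 := hs
    have hupos : 0 < u.1 * u.1 + u.2 * u.2 := by
      rcases (by simpa [Prod.ext_iff] using hu : ¬(u.1 = 0 ∧ u.2 = 0)) with h
      rcases eq_or_ne u.1 0 with h1' | h1'
      · have h2' : u.2 ≠ 0 := by tauto
        nlinarith [mul_self_pos.mpr h2', mul_self_nonneg u.1]
      · nlinarith [mul_self_pos.mpr h1', mul_self_nonneg u.2]
    have hv1 : v.1 * (u.1 * u.1 + u.2 * u.2) = 0 := by linear_combination u.1 * h1 + u.2 * h2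
    have hv2 : v.2 * (u.1 * u.1 + u.2 * u.2) = 0 := by linear_combination u.2 * h1 - u.1 * h2
    have hv1' : v.1 = 0 := by
      rcases mul_eq_zero.mp hv1 with h | h
      · exact h
      · exact absurd h hupos.ne'
    have hv2' : v.2 = 0 := by
      rcases mul_eq_zero.mp hv2 with h | h
      · exact h
      · exact absurd h hupos.ne'
    exact Prod.ext hv1' hv2'
  -- f = d - e is v-periodic
  set f : ℤ × ℤ → ℤ := fun n => d n - e n with hf_def
  have hfv : ∀ n : ℤ × ℤ, f (n - v) = f n := by
    intro n
    have h := congrFun hde n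
    simp only [diffOp] at h
    simp only [hf_def]
    linarith
  have hfv' : ∀ n : ℤ × ℤ, f (n + v) = f n := by
    intro n
    have h := (hfv (n + v)).symm
    simpa using h
  have hfm : ∀ (m : ℤ) (n : ℤ × ℤ), f (n - (m * v.1, m * v.2)) = f n := by
    intro m
    induction m using Int.induction_on with
    | zero => intro n; simp; rw [show ((0:ℤ), (0:ℤ)) = (0 : ℤ × ℤ) from rfl, sub_zero]
    | succ i ih =>
        intro n
        have he' : n - (((i : ℤ) + 1) * v.1, ((i : ℤ) + 1) * v.2)
            = (n - ((i : ℤ) * v.1, (i : ℤ) * v.2)) - v := by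
          apply Prod.ext <;> simp <;> ring
        rw [he', hfv, ih]
    | pred i ih =>
        intro n
        have he' : n - ((-(i : ℤ) - 1) * v.1, (-(i : ℤ) - 1) * v.2)
            = (n - ((-(i : ℤ)) * v.1, (-(i : ℤ)) * v.2)) + v := by
          apply Prod.ext <;> simp <;> ring
        rw [he', hfv', ih]
  have hvu : inner2 v u = 0 := by rw [inner2_comm']; exact huv
  have hvperp : inner2 v (perp u) = s := by rw [inner2_comm']
  -- f vanishes on the strip -k < <x,u> < 0
  have hstrip : ∀ x : ℤ × ℤ, -k < inner2 x u → inner2 x u < 0 → f x = 0 := by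
    intro x h1 h2
    set r : ℤ := inner2 x (perp u) with hr_def
    set a : ℤ := |s| with ha_def
    have ha0 : 0 < a := abs_pos.mpr hs0
    set t : ℤ := r % a with ht_def
    have ht0 : 0 ≤ t := Int.emod_nonneg r (by positivity)
    have hta : t < a := Int.emod_lt_of_pos r ha0
    have hadvd : a ∣ (r - t) := Int.dvd_self_sub_of_emod_eq rfl
    have hsdvd : s ∣ (r - t) := (abs_dvd s (r - t)).mp hadvd
    set m : ℤ := (r - t) / s with hm_def
    have hms : m * s = r - t := by
      rw [hm_def]; exact Int.ediv_mul_cancel hsdvd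
    set y : ℤ × ℤ := x - (m * v.1, m * v.2) with hy_def
    have hyu : inner2 y u = inner2 x u := by
      rw [hy_def, inner2_sub_left', inner2_smul', hvu]; ring
    have hyperp : inner2 y (perp u) = t := by
      rw [hy_def, inner2_sub_left', inner2_smul', hvperp, ← hr_def]
      linarith [hms]
    have hyB : y ∈ Box u k := by
      refine ⟨by rw [hyu]; exact h1, by rw [hyu]; exact h2, ?_, ?_⟩
      · rw [hyperp]; linarith
      · rw [hyperp]; have : a < k := by rw [ha_def]; exact hk
        linarith
    have hfy : f y = 0 := by
      have := hB hyB
      simp only [hf_def]; omega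
    have := hfm m x
    rw [← hy_def] at this
    rw [← this, hfy]
  -- main induction: levels below N
  have key : ∀ N : ℕ, ∀ x : ℤ × ℤ, -k < inner2 x u → inner2 x u < (N : ℤ) → d x = e x := by
    intro N
    induction N with
    | zero =>
        intro x h1 h2
        have := hstrip x h1 (by exact_mod_cast h2)
        simp only [hf_def] at this
        omega
    | succ N ih =>
        intro x h1 h2
        by_cases hlt : inner2 x u < (N : ℤ)
        · exact ih x h1 hlt
        · have hNx : inner2 x u = (N : ℤ) := by push_cast at h2 ⊢; omega
          have hd' : Translate (-x) d ∈ X := hX.2 d hd (-x)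
          have he'' : Translate (-x) e ∈ X := hX.2 e he (-x)
          have heq : Set.EqOn (Translate (-x) d) (Translate (-x) e) (Box u k) := by
            intro y hy
            obtain ⟨hy1, hy2, _, _⟩ := hy
            simp only [Translate, sub_neg_eq_add]
            apply ih
            · rw [inner2_add_left', hNx]
              have : (0 : ℤ) ≤ (N : ℤ) := Int.ofNat_nonneg N
              linarith
            · rw [inner2_add_left', hNx]; linarith
          have h0 := hdet _ hd' _ he'' heq
          simpa [Translate, sub_neg_eq_add] using h0
  -- conclude
  intro z hz
  have hzu : 0 < inner2 z u := by
    have h' : inner2 z (-u) < 0 := hz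
    have : inner2 z (-u) = -inner2 z u := by unfold inner2; simp; ring
    omega
  refine key ((inner2 z u).toNat + 1) z (by omega) ?_
  push_cast
  omega
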